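/- Let D(p,q) be the double star with p + q = n vertices: two adjacent centers u, v with u having p-1 pendant neighbors and v having q-1 pendant neighbors. Then F(D(p,q)) = 2^{n-2} + 2^{p-1} + 2^{q-1} + n - 2. -/

import Mathlib

open SimpleGraph

/-- The number of subtrees of a graph `G`. -/
noncomputable def numSubtrees {V : Type*} [Fintype V] (G : SimpleGraph V) : ℕ :=
  {S : Set V | S.Nonempty ∧ (G.induce S).Connected}.ncard

/-- The double star `D(p,q)` on `p + q` vertices: the center `Sum.inl 0` is adjacent to the
`p - 1` leaves `Sum.inl i` (`i ≠ 0`) and to the center `Sum.inr 0`, which is adjacent to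
the `q - 1` leaves `Sum.inr j` (`j ≠ 0`). -/
def doubleStar (p q : ℕ) : SimpleGraph (Fin p ⊕ Fin q) :=
  SimpleGraph.fromRel (fun x y =>
    match x, y with
    | Sum.inl i, Sum.inl _ => (i : ℕ) = 0
    | Sum.inr i, Sum.inr _ => (i : ℕ) = 0
    | Sum.inl i, Sum.inr j => (i : ℕ) = 0 ∧ (j : ℕ) = 0
    | Sum.inr _, Sum.inl _ => False)


section DSaux
variable {p q : ℕ}


lemma ds_adj_ll {i j : Fin p} :
    (doubleStar p q).Adj (Sum.inl i) (Sum.inl j) ↔ i ≠ j ∧ ((i:ℕ) = 0 ∨ (j:ℕ) = 0) := by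
  simp [doubleStar, SimpleGraph.fromRel_adj]

lemma ds_adj_rr {i j : Fin q} :
    (doubleStar p q).Adj (Sum.inr i) (Sum.inr j) ↔ i ≠ j ∧ ((i:ℕ) = 0 ∨ (j:ℕ) = 0) := by
  simp [doubleStar, SimpleGraph.fromRel_adj]

lemma ds_adj_lr {i : Fin p} {j : Fin q} :
    (doubleStar p q).Adj (Sum.inl i) (Sum.inr j) ↔ (i:ℕ) = 0 ∧ (j:ℕ) = 0 := by
  simp [doubleStar, SimpleGraph.fromRel_adj]

lemma ds_adj_rl {i : Fin p} {j : Fin q} :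
    (doubleStar p q).Adj (Sum.inr j) (Sum.inl i) ↔ (i:ℕ) = 0 ∧ (j:ℕ) = 0 := by
  simp [doubleStar, SimpleGraph.fromRel_adj]

lemma connected_of_hub {α : Type*} {G : SimpleGraph α} {S : Set α} {h : α} (hh : h ∈ S)
    (hx : ∀ x ∈ S, x = h ∨ G.Adj x h ∨ ∃ w ∈ S, G.Adj x w ∧ G.Adj w h) :
    (G.induce S).Connected := by
  rw [connected_iff]
  have key : ∀ a : S, (G.induce S).Reachable a ⟨h, hh⟩ := by
    rintro ⟨x, hxS⟩
    rcases hx x hxS with rfl | hadj | ⟨w, hwS, h1, h2⟩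
    · exact Reachable.refl _
    · exact SimpleGraph.Adj.reachable hadj
    · exact (SimpleGraph.Adj.reachable (u := (⟨x, hxS⟩ : S)) (v := ⟨w, hwS⟩) h1).trans
        (SimpleGraph.Adj.reachable h2)
  exact ⟨fun a b => (key a).trans (key b).symm, ⟨⟨h, hh⟩⟩⟩

lemma ds_cross {S : Set (Fin p ⊕ Fin q)} {a b : S}
    (w : ((doubleStar p q).induce S).Walk a b) :
    ∀ {i : Fin p} {j : Fin q}, (a : Fin p ⊕ Fin q) = Sum.inl i →
      (b : Fin p ⊕ Fin q) = Sum.inr j →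
      (∃ i0 : Fin p, (i0:ℕ) = 0 ∧ Sum.inl i0 ∈ S) ∧
      (∃ j0 : Fin q, (j0:ℕ) = 0 ∧ Sum.inr j0 ∈ S) := by
  induction w with
  | nil => intro i j hi hj; rw [hi] at hj; exact absurd hj (by simp)
  | @cons x c y hadj w ih =>
    intro i j hi hj
    obtain ⟨cv, hcS⟩ := c
    cases cv with
    | inl k => exact ih rfl hj
    | inr k =>
      have : (doubleStar p q).Adj (Sum.inl i) (Sum.inr k) := by
        have := hadj; rw [SimpleGraph.comap_adj] at this
        simpa [hi] using this
      rw [ds_adj_lr] at this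
      exact ⟨⟨i, this.1, hi ▸ x.2⟩, ⟨k, this.2, hcS⟩⟩

lemma ds_only_nbr_l {i : Fin p} {y : Fin p ⊕ Fin q} (hi : (i:ℕ) ≠ 0)
    (h : (doubleStar p q).Adj (Sum.inl i) y) : ∃ i0 : Fin p, (i0:ℕ) = 0 ∧ y = Sum.inl i0 := by
  cases y with
  | inl k =>
    rw [ds_adj_ll] at h
    exact ⟨k, h.2.resolve_left hi, rfl⟩
  | inr k => rw [ds_adj_lr] at h; exact absurd h.1 hi

lemma ds_only_nbr_r {j : Fin q} {y : Fin p ⊕ Fin q} (hj : (j:ℕ) ≠ 0)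
    (h : (doubleStar p q).Adj (Sum.inr j) y) : ∃ j0 : Fin q, (j0:ℕ) = 0 ∧ y = Sum.inr j0 := by
  cases y with
  | inr k =>
    rw [ds_adj_rr] at h
    exact ⟨k, h.2.resolve_left hj, rfl⟩
  | inl k => rw [ds_adj_rl] at h; exact absurd h.2 hj

/-- A vertex in a connected induced subgraph with another vertex has a neighbor in S. -/
lemma exists_nbr {α : Type*} {G : SimpleGraph α} {S : Set α}
    (hc : (G.induce S).Connected) {x y : α} (hx : x ∈ S) (hy : y ∈ S) (hne : x ≠ y) :
    ∃ z ∈ S, G.Adj x z := by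
  obtain ⟨w⟩ := hc.preconnected ⟨x, hx⟩ ⟨y, hy⟩
  cases w with
  | nil => exact absurd rfl hne
  | @cons _ c _ hadj w => exact ⟨c.1, c.2, hadj⟩

lemma ds_connected_iff (hp : 0 < p) (hq : 0 < q) (S : Set (Fin p ⊕ Fin q)) :
    (S.Nonempty ∧ ((doubleStar p q).induce S).Connected) ↔
    ((∃ x, S = {x}) ∨
     (Sum.inl ⟨0, hp⟩ ∈ S ∧ Sum.inr ⟨0, hq⟩ ∈ S) ∨
     (Sum.inl ⟨0, hp⟩ ∈ S ∧ (∀ x ∈ S, ∃ i : Fin p, x = Sum.inl i) ∧ S ≠ {Sum.inl ⟨0, hp⟩}) ∨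
     (Sum.inr ⟨0, hq⟩ ∈ S ∧ (∀ x ∈ S, ∃ j : Fin q, x = Sum.inr j) ∧ S ≠ {Sum.inr ⟨0, hq⟩})) := by
  set u : Fin p ⊕ Fin q := Sum.inl ⟨0, hp⟩ with hu
  set v : Fin p ⊕ Fin q := Sum.inr ⟨0, hq⟩ with hv
  constructor
  · rintro ⟨hne, hc⟩
    by_cases hsing : ∃ x, S = {x}
    · exact Or.inl hsing
    push_neg at hsing
    -- S is nontrivial
    obtain ⟨x, hx⟩ := hne
    have hnt : ∃ y ∈ S, y ≠ x := by
      by_contra h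
      push_neg at h
      exact hsing x (Set.eq_singleton_iff_unique_mem.mpr ⟨hx, h⟩)
    obtain ⟨y, hy, hyx⟩ := hnt
    by_cases hL : ∃ a : Fin p, Sum.inl a ∈ S
    · by_cases hR : ∃ b : Fin q, Sum.inr b ∈ S
      · -- both sides : cross lemma
        obtain ⟨a, ha⟩ := hL
        obtain ⟨b, hb⟩ := hR
        obtain ⟨w⟩ := hc.preconnected ⟨_, ha⟩ ⟨_, hb⟩
        obtain ⟨⟨i0, hi0, hi0S⟩, ⟨j0, hj0, hj0S⟩⟩ := ds_cross w rfl rfl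
        refine Or.inr (Or.inl ⟨?_, ?_⟩)
        · have : (⟨0, hp⟩ : Fin p) = i0 := by apply Fin.ext; simp [hi0]
          rwa [hu, this]
        · have : (⟨0, hq⟩ : Fin q) = j0 := by apply Fin.ext; simp [hj0]
          rwa [hv, this]
      · -- all left
        push_neg at hR
        have hall : ∀ z ∈ S, ∃ i : Fin p, z = Sum.inl i := by
          intro z hz
          cases z with
          | inl i => exact ⟨i, rfl⟩
          | inr j => exact absurd hz (hR j)
        -- find a left vertex with nonzero index
        obtain ⟨i, rfl⟩ := hall x hx
        obtain ⟨j, rfl⟩ := hall y hy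
        have hij : i ≠ j := fun h => hyx (by rw [h])
        have huS : u ∈ S := by
          rcases Nat.eq_zero_or_pos (i : ℕ) with hi | hi
          · -- then j ≠ 0
            have hjne : (j : ℕ) ≠ 0 := fun h => hij (Fin.ext (by rw [hi, h])).symm
            obtain ⟨z, hzS, hadj⟩ := exists_nbr hc hy hx (fun h => hyx h)
            obtain ⟨i0, hi00, rfl⟩ := ds_only_nbr_l hjne hadj
            have : (⟨0, hp⟩ : Fin p) = i0 := Fin.ext (by simp [hi00])
            rwa [hu, this]
          · obtain ⟨z, hzS, hadj⟩ := exists_nbr hc hx hy (fun h => hyx h.symm)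
            obtain ⟨i0, hi00, rfl⟩ := ds_only_nbr_l (Nat.pos_iff_ne_zero.mp hi) hadj
            have : (⟨0, hp⟩ : Fin p) = i0 := Fin.ext (by simp [hi00])
            rwa [hu, this]
        refine Or.inr (Or.inr (Or.inl ⟨huS, hall, ?_⟩))
        exact fun h => hsing u h
    · push_neg at hL
      have hall : ∀ z ∈ S, ∃ j : Fin q, z = Sum.inr j := by
        intro z hz
        cases z with
        | inr j => exact ⟨j, rfl⟩
        | inl i => exact absurd hz (hL i)
      obtain ⟨i, rfl⟩ := hall x hx
      obtain ⟨j, rfl⟩ := hall y hy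
      have hij : i ≠ j := fun h => hyx (by rw [h])
      have hvS : v ∈ S := by
        rcases Nat.eq_zero_or_pos (i : ℕ) with hi | hi
        · have hjne : (j : ℕ) ≠ 0 := fun h => hij (Fin.ext (by rw [hi, h])).symm
          obtain ⟨z, hzS, hadj⟩ := exists_nbr hc hy hx (fun h => hyx h)
          obtain ⟨j0, hj00, rfl⟩ := ds_only_nbr_r hjne hadj
          have : (⟨0, hq⟩ : Fin q) = j0 := Fin.ext (by simp [hj00])
          rwa [hv, this]
        · obtain ⟨z, hzS, hadj⟩ := exists_nbr hc hx hy (fun h => hyx h.symm)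
          obtain ⟨j0, hj00, rfl⟩ := ds_only_nbr_r (Nat.pos_iff_ne_zero.mp hi) hadj
          have : (⟨0, hq⟩ : Fin q) = j0 := Fin.ext (by simp [hj00])
          rwa [hv, this]
      refine Or.inr (Or.inr (Or.inr ⟨hvS, hall, ?_⟩))
      exact fun h => hsing v h
  · rintro (⟨x, rfl⟩ | ⟨huS, hvS⟩ | ⟨huS, hall, -⟩ | ⟨hvS, hall, -⟩)
    · refine ⟨⟨x, rfl⟩, ?_⟩
      apply connected_of_hub (Set.mem_singleton x)
      intro y hy
      exact Or.inl (Set.eq_of_mem_singleton hy)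
    · refine ⟨⟨u, huS⟩, ?_⟩
      apply connected_of_hub huS
      intro x hxS
      cases x with
      | inl i =>
        rcases Nat.eq_zero_or_pos (i : ℕ) with hi | hi
        · exact Or.inl (by rw [hu]; congr 1; exact Fin.ext (by simp [hi]))
        · refine Or.inr (Or.inl ?_)
          rw [hu, ds_adj_ll]
          exact ⟨fun h => by simp [h] at hi, Or.inr rfl⟩
      | inr j =>
        rcases Nat.eq_zero_or_pos (j : ℕ) with hj | hj
        · refine Or.inr (Or.inl ?_)
          rw [hu, ds_adj_rl]
          exact ⟨rfl, hj⟩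
        · refine Or.inr (Or.inr ⟨v, hvS, ?_, ?_⟩)
          · rw [hv, ds_adj_rr]
            exact ⟨fun h => by simp [h] at hj, Or.inr rfl⟩
          · rw [hu, hv, ds_adj_rl]
            exact ⟨rfl, rfl⟩
    · refine ⟨⟨u, huS⟩, ?_⟩
      apply connected_of_hub huS
      intro x hxS
      obtain ⟨i, rfl⟩ := hall x hxS
      rcases Nat.eq_zero_or_pos (i : ℕ) with hi | hi
      · exact Or.inl (by rw [hu]; congr 1; exact Fin.ext (by simp [hi]))
      · refine Or.inr (Or.inl ?_)
        rw [hu, ds_adj_ll]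
        exact ⟨fun h => by simp [h] at hi, Or.inr rfl⟩
    · refine ⟨⟨v, hvS⟩, ?_⟩
      apply connected_of_hub hvS
      intro x hxS
      obtain ⟨j, rfl⟩ := hall x hxS
      rcases Nat.eq_zero_or_pos (j : ℕ) with hj | hj
      · exact Or.inl (by rw [hv]; congr 1; exact Fin.ext (by simp [hj]))
      · refine Or.inr (Or.inl ?_)
        rw [hv, ds_adj_rr]
        exact ⟨fun h => by simp [h] at hj, Or.inr rfl⟩

lemma union_val_image_injective {α : Type*} (W B : Set α) (h : ∀ x : W, (x : α) ∉ B) :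
    Function.Injective (fun T : Set W => B ∪ (Subtype.val '' T)) := by
  have key : ∀ (T : Set W) (x : W), x ∈ T ↔ (x : α) ∈ B ∪ (Subtype.val '' T) := by
    intro T x
    simp [h x, Subtype.val_injective.mem_set_image]
  intro T1 T2 he
  have he' : B ∪ (Subtype.val '' T1) = B ∪ (Subtype.val '' T2) := he
  ext x
  rw [key T1 x, he', ← key T2 x]

lemma count_A1 : {S : Set (Fin p ⊕ Fin q) | ∃ x, S = {x}}.ncard = p + q := by
  have h1 : {S : Set (Fin p ⊕ Fin q) | ∃ x, S = {x}} =
      (fun x : Fin p ⊕ Fin q => ({x} : Set _)) '' Set.univ := by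
    ext S
    simp [eq_comm]
  rw [h1, Set.ncard_image_of_injective _ Set.singleton_injective, Set.ncard_univ,
    Nat.card_eq_fintype_card, Fintype.card_sum, Fintype.card_fin, Fintype.card_fin]

lemma count_A2 (hp : 0 < p) (hq : 0 < q) :
    {S : Set (Fin p ⊕ Fin q) | Sum.inl ⟨0, hp⟩ ∈ S ∧ Sum.inr ⟨0, hq⟩ ∈ S}.ncard
      = 2 ^ (p + q - 2) := by
  set u : Fin p ⊕ Fin q := Sum.inl ⟨0, hp⟩ with hu
  set v : Fin p ⊕ Fin q := Sum.inr ⟨0, hq⟩ with hv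
  set W : Set (Fin p ⊕ Fin q) := {u, v}ᶜ with hW
  have hnB : ∀ x : W, (x : Fin p ⊕ Fin q) ∉ ({u, v} : Set (Fin p ⊕ Fin q)) := fun x => x.2
  have himg : {S : Set (Fin p ⊕ Fin q) | u ∈ S ∧ v ∈ S} =
      (fun T : Set W => ({u, v} : Set (Fin p ⊕ Fin q)) ∪ (Subtype.val '' T)) '' Set.univ := by
    ext S
    simp only [Set.mem_setOf_eq, Set.mem_image, Set.mem_univ, true_and]
    constructor
    · rintro ⟨huS, hvS⟩
      refine ⟨{x : W | (x : Fin p ⊕ Fin q) ∈ S}, ?_⟩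
      ext z
      simp only [Set.mem_union, Set.mem_image, Set.mem_setOf_eq]
      constructor
      · rintro (hz | ⟨x, hxS, rfl⟩)
        · rcases hz with rfl | rfl
          · exact huS
          · exact hvS
        · exact hxS
      · intro hzS
        by_cases hz : z ∈ ({u, v} : Set (Fin p ⊕ Fin q))
        · exact Or.inl hz
        · exact Or.inr ⟨⟨z, hz⟩, hzS, rfl⟩
    · rintro ⟨T, rfl⟩
      exact ⟨Or.inl (Or.inl rfl), Or.inl (Or.inr rfl)⟩
  rw [himg, Set.ncard_image_of_injective _ (union_val_image_injective W _ hnB),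
    Set.ncard_univ, Nat.card_eq_fintype_card, Fintype.card_set]
  congr 1
  have h2 : ({u, v} : Set (Fin p ⊕ Fin q)).ncard = 2 := Set.ncard_pair (by simp [hu, hv])
  have h3 := Set.ncard_add_ncard_compl ({u, v} : Set (Fin p ⊕ Fin q))
  rw [h2, Nat.card_eq_fintype_card, Fintype.card_sum, Fintype.card_fin, Fintype.card_fin] at h3
  rw [← Nat.card_eq_fintype_card]
  show Nat.card ({u, v}ᶜ : Set (Fin p ⊕ Fin q)) = p + q - 2
  rw [Nat.card_coe_set_eq]
  omega

lemma count_nonempty_sets {β : Type*} [Fintype β] :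
    {T : Set β | T.Nonempty}.ncard = 2 ^ Fintype.card β - 1 := by
  have h1 : {T : Set β | T.Nonempty} = ({(∅ : Set β)} : Set (Set β))ᶜ := by
    ext T
    simp [Set.nonempty_iff_ne_empty]
  have h3 := Set.ncard_add_ncard_compl ({(∅ : Set β)} : Set (Set β))
  rw [Set.ncard_singleton, Nat.card_eq_fintype_card, Fintype.card_set] at h3
  rw [h1]
  omega

lemma count_A3 (hp : 0 < p) (hq : 0 < q) :
    {S : Set (Fin p ⊕ Fin q) | Sum.inl ⟨0, hp⟩ ∈ S ∧ (∀ x ∈ S, ∃ i : Fin p, x = Sum.inl i)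
      ∧ S ≠ {Sum.inl ⟨0, hp⟩}}.ncard = 2 ^ (p - 1) - 1 := by
  set u : Fin p ⊕ Fin q := Sum.inl ⟨0, hp⟩ with hu
  set L : Set (Fin p ⊕ Fin q) := Sum.inl '' {i : Fin p | (i : ℕ) ≠ 0} with hL
  have hnB : ∀ x : L, (x : Fin p ⊕ Fin q) ∉ ({u} : Set (Fin p ⊕ Fin q)) := by
    rintro ⟨x, i, hi, rfl⟩ hmem
    rw [Set.mem_singleton_iff, hu] at hmem
    exact hi (by rw [Sum.inl.injEq] at hmem; rw [hmem])
  have himg : {S : Set (Fin p ⊕ Fin q) | u ∈ S ∧ (∀ x ∈ S, ∃ i : Fin p, x = Sum.inl i)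
        ∧ S ≠ {u}} =
      (fun T : Set L => ({u} : Set (Fin p ⊕ Fin q)) ∪ (Subtype.val '' T)) ''
        {T : Set L | T.Nonempty} := by
    ext S
    simp only [Set.mem_setOf_eq, Set.mem_image]
    constructor
    · rintro ⟨huS, hall, hne⟩
      have hy : ∃ y ∈ S, y ≠ u := by
        by_contra h
        push_neg at h
        exact hne (Set.eq_singleton_iff_unique_mem.mpr ⟨huS, h⟩)
      obtain ⟨y, hyS, hyu⟩ := hy
      obtain ⟨i, rfl⟩ := hall y hyS
      have hiz : (i : ℕ) ≠ 0 := by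
        intro h
        exact hyu (by rw [hu]; congr 1; exact Fin.ext (by simp [h]))
      refine ⟨{x : L | (x : Fin p ⊕ Fin q) ∈ S}, ⟨⟨Sum.inl i, ⟨i, hiz, rfl⟩⟩, hyS⟩, ?_⟩
      ext z
      simp only [Set.mem_union, Set.mem_image, Set.mem_setOf_eq, Set.mem_singleton_iff]
      constructor
      · rintro (rfl | ⟨x, hxS, rfl⟩)
        · exact huS
        · exact hxS
      · intro hzS
        obtain ⟨k, rfl⟩ := hall z hzS
        by_cases hk : (k : ℕ) = 0
        · exact Or.inl (by rw [hu]; congr 1; exact Fin.ext (by simp [hk]))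
        · exact Or.inr ⟨⟨Sum.inl k, ⟨k, hk, rfl⟩⟩, hzS, rfl⟩
    · rintro ⟨T, ⟨t, htT⟩, rfl⟩
      refine ⟨Or.inl rfl, ?_, ?_⟩
      · rintro x (rfl | ⟨⟨x', i, hi, rfl⟩, -, rfl⟩)
        · exact ⟨⟨0, hp⟩, hu⟩
        · exact ⟨i, rfl⟩
      · intro h
        have htmem : (t : Fin p ⊕ Fin q) ∈ ({u} : Set (Fin p ⊕ Fin q)) ∪ Subtype.val '' T :=
          Or.inr ⟨t, htT, rfl⟩
        rw [h, Set.mem_singleton_iff] at htmem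
        exact hnB t (htmem ▸ rfl)
  rw [himg, Set.ncard_image_of_injective _ (union_val_image_injective L _ hnB),
    count_nonempty_sets]
  congr 2
  have h1 : L.ncard = p - 1 := by
    rw [hL, Set.ncard_image_of_injective _ Sum.inl_injective]
    have h2 : {i : Fin p | (i : ℕ) ≠ 0} = ({(⟨0, hp⟩ : Fin p)} : Set (Fin p))ᶜ := by
      ext i
      simp [Fin.ext_iff]
    have h3 := Set.ncard_add_ncard_compl ({(⟨0, hp⟩ : Fin p)} : Set (Fin p))
    rw [Set.ncard_singleton, Nat.card_eq_fintype_card, Fintype.card_fin] at h3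
    rw [h2]
    omega
  rw [← Nat.card_eq_fintype_card]
  show Nat.card L = p - 1
  rw [Nat.card_coe_set_eq]
  exact h1

lemma count_A4 (hp : 0 < p) (hq : 0 < q) :
    {S : Set (Fin p ⊕ Fin q) | Sum.inr ⟨0, hq⟩ ∈ S ∧ (∀ x ∈ S, ∃ j : Fin q, x = Sum.inr j)
      ∧ S ≠ {Sum.inr ⟨0, hq⟩}}.ncard = 2 ^ (q - 1) - 1 := by
  set u : Fin p ⊕ Fin q := Sum.inr ⟨0, hq⟩ with hu
  set L : Set (Fin p ⊕ Fin q) := Sum.inr '' {j : Fin q | (j : ℕ) ≠ 0} with hL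
  have hnB : ∀ x : L, (x : Fin p ⊕ Fin q) ∉ ({u} : Set (Fin p ⊕ Fin q)) := by
    rintro ⟨x, i, hi, rfl⟩ hmem
    rw [Set.mem_singleton_iff, hu] at hmem
    exact hi (by rw [Sum.inr.injEq] at hmem; rw [hmem])
  have himg : {S : Set (Fin p ⊕ Fin q) | u ∈ S ∧ (∀ x ∈ S, ∃ j : Fin q, x = Sum.inr j)
        ∧ S ≠ {u}} =
      (fun T : Set L => ({u} : Set (Fin p ⊕ Fin q)) ∪ (Subtype.val '' T)) ''
        {T : Set L | T.Nonempty} := by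
    ext S
    simp only [Set.mem_setOf_eq, Set.mem_image]
    constructor
    · rintro ⟨huS, hall, hne⟩
      have hy : ∃ y ∈ S, y ≠ u := by
        by_contra h
        push_neg at h
        exact hne (Set.eq_singleton_iff_unique_mem.mpr ⟨huS, h⟩)
      obtain ⟨y, hyS, hyu⟩ := hy
      obtain ⟨j, rfl⟩ := hall y hyS
      have hiz : (j : ℕ) ≠ 0 := by
        intro h
        exact hyu (by rw [hu]; congr 1; exact Fin.ext (by simp [h]))
      refine ⟨{x : L | (x : Fin p ⊕ Fin q) ∈ S}, ⟨⟨Sum.inr j, ⟨j, hiz, rfl⟩⟩, hyS⟩, ?_⟩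
      ext z
      simp only [Set.mem_union, Set.mem_image, Set.mem_setOf_eq, Set.mem_singleton_iff]
      constructor
      · rintro (rfl | ⟨x, hxS, rfl⟩)
        · exact huS
        · exact hxS
      · intro hzS
        obtain ⟨k, rfl⟩ := hall z hzS
        by_cases hk : (k : ℕ) = 0
        · exact Or.inl (by rw [hu]; congr 1; exact Fin.ext (by simp [hk]))
        · exact Or.inr ⟨⟨Sum.inr k, ⟨k, hk, rfl⟩⟩, hzS, rfl⟩
    · rintro ⟨T, ⟨t, htT⟩, rfl⟩
      refine ⟨Or.inl rfl, ?_, ?_⟩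
      · rintro x (rfl | ⟨⟨x', j, hj, rfl⟩, -, rfl⟩)
        · exact ⟨⟨0, hq⟩, hu⟩
        · exact ⟨j, rfl⟩
      · intro h
        have htmem : (t : Fin p ⊕ Fin q) ∈ ({u} : Set (Fin p ⊕ Fin q)) ∪ Subtype.val '' T :=
          Or.inr ⟨t, htT, rfl⟩
        rw [h, Set.mem_singleton_iff] at htmem
        exact hnB t (htmem ▸ rfl)
  rw [himg, Set.ncard_image_of_injective _ (union_val_image_injective L _ hnB),
    count_nonempty_sets]
  congr 2
  have h1 : L.ncard = q - 1 := by
    rw [hL, Set.ncard_image_of_injective _ Sum.inr_injective]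
    have h2 : {j : Fin q | (j : ℕ) ≠ 0} = ({(⟨0, hq⟩ : Fin q)} : Set (Fin q))ᶜ := by
      ext j
      simp [Fin.ext_iff]
    have h3 := Set.ncard_add_ncard_compl ({(⟨0, hq⟩ : Fin q)} : Set (Fin q))
    rw [Set.ncard_singleton, Nat.card_eq_fintype_card, Fintype.card_fin] at h3
    rw [h2]
    omega
  rw [← Nat.card_eq_fintype_card]
  show Nat.card L = q - 1
  rw [Nat.card_coe_set_eq]
  exact h1

theorem numSubtrees_doubleStar (p q n : ℕ) (hp : 1 ≤ p) (hq : 1 ≤ q) (hn : p + q = n) :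
    numSubtrees (doubleStar p q) = 2 ^ (n - 2) + 2 ^ (p - 1) + 2 ^ (q - 1) + n - 2 := by
  subst hn
  have hp' : 0 < p := hp
  have hq' : 0 < q := hq
  set u : Fin p ⊕ Fin q := Sum.inl ⟨0, hp'⟩ with hu
  set v : Fin p ⊕ Fin q := Sum.inr ⟨0, hq'⟩ with hv
  set A1 : Set (Set (Fin p ⊕ Fin q)) := {S | ∃ x, S = {x}} with hA1
  set A2 : Set (Set (Fin p ⊕ Fin q)) := {S | u ∈ S ∧ v ∈ S} with hA2
  set A3 : Set (Set (Fin p ⊕ Fin q)) :=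
    {S | u ∈ S ∧ (∀ x ∈ S, ∃ i : Fin p, x = Sum.inl i) ∧ S ≠ {u}} with hA3
  set A4 : Set (Set (Fin p ⊕ Fin q)) :=
    {S | v ∈ S ∧ (∀ x ∈ S, ∃ j : Fin q, x = Sum.inr j) ∧ S ≠ {v}} with hA4
  have hsets : numSubtrees (doubleStar p q) = (A1 ∪ (A2 ∪ (A3 ∪ A4))).ncard := by
    unfold numSubtrees
    congr 1
    ext S
    rw [Set.mem_setOf_eq, ds_connected_iff hp' hq']
    simp only [hA1, hA2, hA3, hA4, Set.mem_union, Set.mem_setOf_eq]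
    exact Iff.rfl
  have d3 : Disjoint A3 A4 := by
    rw [Set.disjoint_left]
    rintro S ⟨huS, hall, -⟩ ⟨hvS, -, -⟩
    obtain ⟨i, hi⟩ := hall v hvS
    simp [hv] at hi
  have d2 : Disjoint A2 (A3 ∪ A4) := by
    rw [Set.disjoint_left]
    rintro S ⟨huS, hvS⟩ (⟨-, hall, -⟩ | ⟨-, hall, -⟩)
    · obtain ⟨i, hi⟩ := hall v hvS
      simp [hv] at hi
    · obtain ⟨j, hj⟩ := hall u huS
      simp [hu] at hj
  have d1 : Disjoint A1 (A2 ∪ (A3 ∪ A4)) := by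
    rw [Set.disjoint_left]
    rintro S ⟨x, rfl⟩ (⟨huS, hvS⟩ | ⟨huS, -, hne⟩ | ⟨hvS, -, hne⟩)
    · rw [Set.mem_singleton_iff] at huS hvS
      rw [← huS, hu, hv] at hvS
      simp at hvS
    · rw [Set.mem_singleton_iff] at huS
      exact hne (by rw [huS])
    · rw [Set.mem_singleton_iff] at hvS
      exact hne (by rw [hvS])
  rw [hsets, Set.ncard_union_eq d1, Set.ncard_union_eq d2, Set.ncard_union_eq d3,
    hA1, hA2, hA3, hA4, count_A1, count_A2 hp' hq', count_A3 hp' hq', count_A4 hp' hq']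
  have b1 : 1 ≤ 2 ^ (p - 1) := Nat.one_le_two_pow
  have c1 : 1 ≤ 2 ^ (q - 1) := Nat.one_le_two_pow
  generalize (2 : ℕ) ^ (p + q - 2) = a
  generalize hb : (2 : ℕ) ^ (p - 1) = b at b1 ⊢
  generalize hc : (2 : ℕ) ^ (q - 1) = c at c1 ⊢
  omega

end DSaux
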